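/- Let (X, Σ, μ) be a measure space, Y a Banach space over ℝ, and 1 ≤ p < ∞. Let l_1, …, l_n : X → X be measurable injective maps whose images l_i(X) are measurable, pairwise disjoint, and cover X, such that each l_i has a measurable inverse on its image, and suppose there are constants L_i > 0 with μ(l_i(A)) ≤ L_i·μ(A) for every measurable set A ⊆ X. Let q_i : X → Y and S_i : X → ℝ be measurable with |S_i(x)| ≤ s_i for μ-a.e. x ∈ X, and let T be the affine Read–Bajraktarević operator determined by T g (l_i(x)) = q_i(x) + S_i(x)·g(x) for x ∈ X, i = 1,…,n. Then for all measurable g, h : X → Y, ∫_X ‖T g(x) − T h(x)‖^p dμ(x) ≤ (Σ_{i=1}^n s_i^p · L_i) · ∫_X ‖g(x) − h(x)‖^p dμ(x); equivalently, ‖T g − T h‖_{L^p} ≤ (Σ_{i=1}^n s_i^p L_i)^{1/p} ‖g − h‖_{L^p}. -/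

import Mathlib

open MeasureTheory

/-- `L^p`-Lipschitz estimate for the affine Read–Bajraktarević operator
`T g (l i x) = q i x + S i x • g x`, where the injective measurable maps `l i` have
measurable images (with measurable inverses), partition `X`, and satisfy
`μ(l i '' A) ≤ L i · μ(A)`, and `‖S i‖ ≤ s i` a.e.:
`∫ ‖Tg − Th‖^p dμ ≤ (∑ i, s iᵖ · L i) · ∫ ‖g − h‖^p dμ`. -/
theorem affine_RB_Lp_lipschitz {X Y : Type*} [MeasurableSpace X]
    [NormedAddCommGroup Y] [NormedSpace ℝ Y]
    (μ : Measure X) (p : ℝ) (hp : 1 ≤ p)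
    (n : ℕ) (l : Fin n → X → X)
    (hinj : ∀ i, Function.Injective (l i))
    (hmeas : ∀ i, Measurable (l i))
    (himg : ∀ i (A : Set X), MeasurableSet A → MeasurableSet (l i '' A))
    (hcover : (⋃ i, Set.range (l i)) = Set.univ)
    (hdisj : ∀ i j, i ≠ j → Set.range (l i) ∩ Set.range (l j) = ∅)
    (L : Fin n → NNReal) (hL : ∀ i, 0 < L i)
    (hLmu : ∀ i (A : Set X), MeasurableSet A → μ (l i '' A) ≤ (L i : ENNReal) * μ A)
    (q : Fin n → X → Y) (S : Fin n → X → ℝ)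
    (hq : ∀ i, StronglyMeasurable (q i)) (hSmeas : ∀ i, Measurable (S i))
    (s : Fin n → NNReal) (hS : ∀ i, ∀ᵐ x ∂μ, ‖S i x‖₊ ≤ s i)
    (T : (X → Y) → (X → Y))
    (hT : ∀ (g : X → Y) i x, T g (l i x) = q i x + S i x • g x) :
    ∀ g h : X → Y, StronglyMeasurable g → StronglyMeasurable h →
      ∫⁻ x, (‖T g x - T h x‖₊ : ENNReal) ^ p ∂μ ≤
        (∑ i, (s i : ENNReal) ^ p * (L i : ENNReal)) *
          ∫⁻ x, (‖g x - h x‖₊ : ENNReal) ^ p ∂μ := by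
  intro g h hg hh
  have hp0 : 0 ≤ p := le_trans zero_le_one hp
  set F : X → ENNReal := fun x => (‖T g x - T h x‖₊ : ENNReal) ^ p with hF
  set G : X → ENNReal := fun x => (‖g x - h x‖₊ : ENNReal) ^ p with hG
  have hemb : ∀ i, MeasurableEmbedding (l i) :=
    fun i => ⟨hinj i, hmeas i, fun {A} hA => himg i A hA⟩
  have hrange : ∀ i, MeasurableSet (Set.range (l i)) := by
    intro i
    rw [← Set.image_univ]
    exact himg i _ MeasurableSet.univ
  -- split the integral over the ranges
  have hsplit : ∫⁻ x, F x ∂μ = ∑ i, ∫⁻ x in Set.range (l i), F x ∂μ := by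
    have hdisj' : Pairwise (Function.onFun Disjoint fun i => Set.range (l i)) := by
      intro i j hij
      exact Set.disjoint_iff_inter_eq_empty.2 (hdisj i j hij)
    rw [← setLIntegral_univ, ← hcover, lintegral_iUnion hrange hdisj' F,
      tsum_fintype]
  rw [hsplit]
  -- estimate each piece
  have hpiece : ∀ i, ∫⁻ x in Set.range (l i), F x ∂μ ≤
      ((s i : ENNReal) ^ p * (L i : ENNReal)) * ∫⁻ x, G x ∂μ := by
    intro i
    set ν : Measure X := μ.comap (l i) with hν
    have hνle : ν ≤ (L i : ENNReal) • μ := by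
      refine Measure.le_iff.2 fun A hA => ?_
      rw [hν, Measure.comap_apply (l i) (hinj i) (fun A hA => himg i A hA) μ hA]
      exact hLmu i A hA
    have hmc : (ν.map (l i)) = μ.restrict (Set.range (l i)) :=
      MeasurableEmbedding.map_comap (hemb i) μ
    have h1 : ∫⁻ x in Set.range (l i), F x ∂μ = ∫⁻ y, F (l i y) ∂ν := by
      rw [← hmc, (hemb i).lintegral_map]
    rw [h1]
    have hFeq : ∀ y, F (l i y) = (‖S i y‖₊ : ENNReal) ^ p * G y := by
      intro y
      have : T g (l i y) - T h (l i y) = S i y • (g y - h y) := by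
        rw [hT g i y, hT h i y, smul_sub]
        abel
      rw [hF]
      simp only [this, nnnorm_smul, ENNReal.coe_mul,
        ENNReal.mul_rpow_of_nonneg _ _ hp0]
      rfl
    have hac : ν ≪ μ := Measure.absolutelyContinuous_of_le_smul hνle
    have hSν : ∀ᵐ y ∂ν, (‖S i y‖₊ : ENNReal) ^ p * G y ≤ (s i : ENNReal) ^ p * G y := by
      filter_upwards [hac.ae_le (hS i)] with y hy
      exact mul_le_mul_left (ENNReal.rpow_le_rpow (ENNReal.coe_le_coe.2 hy) hp0) _
    calc ∫⁻ y, F (l i y) ∂ν = ∫⁻ y, (‖S i y‖₊ : ENNReal) ^ p * G y ∂ν := by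
          simp only [hFeq]
      _ ≤ ∫⁻ y, (s i : ENNReal) ^ p * G y ∂ν := lintegral_mono_ae hSν
      _ = (s i : ENNReal) ^ p * ∫⁻ y, G y ∂ν := by
          exact lintegral_const_mul' _ _ (ENNReal.rpow_ne_top_of_nonneg hp0 ENNReal.coe_ne_top)
      _ ≤ (s i : ENNReal) ^ p * ((L i : ENNReal) * ∫⁻ y, G y ∂μ) := by
          refine mul_le_mul_right ?_ _
          calc ∫⁻ y, G y ∂ν ≤ ∫⁻ y, G y ∂((L i : ENNReal) • μ) :=
                lintegral_mono' hνle le_rfl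
            _ = (L i : ENNReal) * ∫⁻ y, G y ∂μ := lintegral_smul_measure _ _
      _ = ((s i : ENNReal) ^ p * (L i : ENNReal)) * ∫⁻ y, G y ∂μ := by ring
  calc ∑ i, ∫⁻ x in Set.range (l i), F x ∂μ
      ≤ ∑ i, ((s i : ENNReal) ^ p * (L i : ENNReal)) * ∫⁻ x, G x ∂μ :=
        Finset.sum_le_sum fun i _ => hpiece i
    _ = (∑ i, (s i : ENNReal) ^ p * (L i : ENNReal)) * ∫⁻ x, G x ∂μ := by
        rw [Finset.sum_mul]
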